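/- Let γ : ℝ → ℂ be smooth (C^∞) and 2π-periodic, with Fourier coefficients aₙ = (1/2π)∫₀^{2π} γ(θ)e^{-inθ} dθ for n ∈ ℤ. Let 0 < r₁ < 1 < r₂ and let A = {z ∈ ℂ : r₁ < |z| < r₂}. Then the following are equivalent: (a) there exists a function g : ℂ → ℂ that is complex differentiable (holomorphic) on A and satisfies g(e^{iθ}) = γ(θ) for all θ ∈ ℝ; (b) for every z ∈ A, both series Σ_{n≥0} aₙ zⁿ and Σ_{n≥1} a₋ₙ z^{−n} converge. -/

import Mathlib

open Real Filter Metric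

lemma summable_geom_bound {f : ℕ → ℂ} {C r : ℝ} (hr0 : 0 ≤ r) (hr : r < 1)
    (h : ∀ n, ‖f n‖ ≤ C * r ^ n) : Summable f :=
  Summable.of_norm_bounded ((summable_geometric_of_lt_one hr0 hr).mul_left C) h

lemma exists_bound_of_tendsto_range {t : ℕ → ℂ} {l : ℂ}
    (h : Tendsto (fun N : ℕ => ∑ n ∈ Finset.range N, t n) atTop (nhds l)) :
    ∃ C : ℝ, ∀ n, ‖t n‖ ≤ C := by
  have h2 : Tendsto (fun n : ℕ => ‖t n‖) atTop (nhds ‖l - l‖) := by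
    apply Filter.Tendsto.norm
    have := ((h.comp (tendsto_add_atTop_nat 1)).sub h)
    refine this.congr fun n => ?_
    simp [Finset.sum_range_succ]
  obtain ⟨C, hC⟩ := h2.bddAbove_range
  exact ⟨C, fun n => hC ⟨n, rfl⟩⟩

lemma exists_bound_of_tendsto_Icc {t : ℕ → ℂ} {l : ℂ}
    (h : Tendsto (fun N : ℕ => ∑ n ∈ Finset.Icc 1 N, t n) atTop (nhds l)) :
    ∃ C : ℝ, ∀ n, 1 ≤ n → ‖t n‖ ≤ C := by
  have h2 : Tendsto (fun n : ℕ => ‖t (n + 1)‖) atTop (nhds ‖l - l‖) := by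
    apply Filter.Tendsto.norm
    have := ((h.comp (tendsto_add_atTop_nat 1)).sub h)
    refine this.congr fun n => ?_
    simp only [Function.comp_apply]
    rw [Finset.sum_Icc_succ_top (Nat.le_add_left 1 n)]
    ring
  obtain ⟨C, hC⟩ := h2.bddAbove_range
  refine ⟨C, fun n hn => ?_⟩
  obtain ⟨m, rfl⟩ := Nat.exists_eq_add_of_le hn
  exact hC ⟨m, by rw [add_comm]⟩

lemma tendsto_Icc_of_summable {b : ℕ → ℂ} (hb : Summable fun n => b (n + 1)) :
    ∃ l, Tendsto (fun N : ℕ => ∑ n ∈ Finset.Icc 1 N, b n) atTop (nhds l) := by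
  refine ⟨∑' n, b (n + 1), ?_⟩
  have := hb.hasSum.tendsto_sum_nat
  refine this.congr fun N => ?_
  rw [← Finset.Ico_add_one_right_eq_Icc, Finset.sum_Ico_eq_sum_range]
  simp [add_comm]

lemma circle_int_const {f : ℂ → ℂ} {r₁ r₂ : ℝ} (hr₁ : 0 < r₁)
    (hf : ∀ w : ℂ, r₁ < ‖w‖ → ‖w‖ < r₂ → DifferentiableAt ℂ f w)
    {ρ₁ ρ₂ : ℝ} (h1 : r₁ < ρ₁) (h12 : ρ₁ ≤ ρ₂) (h2 : ρ₂ < r₂) :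
    (∮ z in C(0, ρ₂), f z) = ∮ z in C(0, ρ₁), f z := by
  have key : ∀ w : ℂ, w ∈ closedBall (0:ℂ) ρ₂ \ ball (0:ℂ) ρ₁ → DifferentiableAt ℂ f w := by
    intro w hw
    obtain ⟨hw1, hw2⟩ := hw
    rw [mem_closedBall, dist_zero_right] at hw1
    rw [mem_ball, dist_zero_right, not_lt] at hw2
    exact hf w (lt_of_lt_of_le h1 hw2) (lt_of_le_of_lt hw1 h2)
  refine Complex.circleIntegral_eq_of_differentiable_on_annulus_off_countable (hr₁.trans h1) h12
    Set.countable_empty (fun w hw => (key w hw).continuousAt.continuousWithinAt)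
    (fun w hw => key w ⟨ball_subset_closedBall hw.1.1, fun h => hw.1.2 (ball_subset_closedBall h)⟩)

lemma circle_int_unit {γ : ℝ → ℂ} {a : ℤ → ℂ}
    (ha : ∀ n : ℤ, a n = (2 * (π : ℂ))⁻¹ *
      ∫ θ in (0:ℝ)..(2 * π), γ θ * Complex.exp (-(n : ℂ) * (θ : ℂ) * Complex.I))
    {g : ℂ → ℂ} (hb : ∀ θ : ℝ, g (Complex.exp ((θ : ℂ) * Complex.I)) = γ θ) (n : ℤ) :
    (∮ z in C(0, 1), z ^ (-n - 1) * g z) = (2 * π * Complex.I) * a n := by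
  have hπ : (2 * (π : ℂ)) ≠ 0 := by
    simp [Real.pi_ne_zero, Complex.ofReal_ne_zero]
  have hint : ∫ θ in (0:ℝ)..(2 * π), γ θ * Complex.exp (-(n : ℂ) * (θ : ℂ) * Complex.I)
      = 2 * (π : ℂ) * a n := by
    rw [ha n, ← mul_assoc, mul_inv_cancel₀ hπ, one_mul]
  rw [circleIntegral]
  have : ∀ θ : ℝ, deriv (circleMap 0 1) θ •
      ((circleMap 0 1 θ) ^ (-n - 1) * g (circleMap 0 1 θ))
      = Complex.I * (γ θ * Complex.exp (-(n : ℂ) * (θ : ℂ) * Complex.I)) := by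
    intro θ
    rw [deriv_circleMap, smul_eq_mul, circleMap_zero]
    push_cast
    rw [one_mul, hb θ]
    rw [show Complex.exp ((θ:ℂ) * Complex.I) ^ (-n - 1)
        = Complex.exp (((-n - 1 : ℤ) : ℂ) * ((θ:ℂ) * Complex.I)) from
      (Complex.exp_int_mul _ _).symm]
    have e : Complex.exp ((θ:ℂ) * Complex.I) *
        Complex.exp (((-n - 1 : ℤ) : ℂ) * ((θ:ℂ) * Complex.I))
        = Complex.exp (-(n : ℂ) * (θ:ℂ) * Complex.I) := by
      rw [← Complex.exp_add]; congr 1; push_cast; ring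
    linear_combination (Complex.I * γ θ) * e
  simp_rw [this]
  rw [intervalIntegral.integral_const_mul, hint]
  ring

lemma coeff_bound {γ : ℝ → ℂ} {a : ℤ → ℂ}
    (ha : ∀ n : ℤ, a n = (2 * (π : ℂ))⁻¹ *
      ∫ θ in (0:ℝ)..(2 * π), γ θ * Complex.exp (-(n : ℂ) * (θ : ℂ) * Complex.I))
    {g : ℂ → ℂ} {r₁ r₂ : ℝ} (hr₁ : 0 < r₁) (hr₁' : r₁ < 1) (hr₂ : 1 < r₂)
    (hg : ∀ z : ℂ, r₁ < ‖z‖ → ‖z‖ < r₂ → DifferentiableAt ℂ g z)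
    (hb : ∀ θ : ℝ, g (Complex.exp ((θ : ℂ) * Complex.I)) = γ θ)
    {ρ : ℝ} (hρ₁ : r₁ < ρ) (hρ₂ : ρ < r₂) :
    ∃ M : ℝ, 0 ≤ M ∧ ∀ n : ℤ, ‖a n‖ ≤ M * ρ ^ (-n) := by
  have hρ0 : 0 < ρ := hr₁.trans hρ₁
  obtain ⟨M, hM⟩ := (isCompact_sphere (0:ℂ) ρ).exists_bound_of_continuousOn
    (f := g) (fun w hw => by
      rw [mem_sphere_zero_iff_norm] at hw
      exact ((hg w (hw ▸ hρ₁) (hw ▸ hρ₂)).continuousAt).continuousWithinAt)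
  refine ⟨max M 0, le_max_right _ _, fun n => ?_⟩
  set f : ℂ → ℂ := fun w => w ^ (-n - 1) * g w with hf
  have hdiff : ∀ w : ℂ, r₁ < ‖w‖ → ‖w‖ < r₂ → DifferentiableAt ℂ f w := by
    intro w h1 h2
    have hw0 : w ≠ 0 := by
      intro h; rw [h] at h1; simp at h1; linarith
    exact ((differentiableAt_zpow.mpr (Or.inl hw0)).mul (hg w h1 h2))
  have eq1 : (∮ z in C(0, ρ), f z) = (2 * π * Complex.I) * a n := by
    rcases le_total ρ 1 with h | h
    · rw [← circle_int_const hr₁ hdiff hρ₁ h hr₂]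
      exact circle_int_unit ha hb n
    · rw [circle_int_const hr₁ hdiff hr₁' h hρ₂]
      exact circle_int_unit ha hb n
  have hzle : 0 ≤ ρ ^ (-n - 1) := le_of_lt (zpow_pos hρ0 _)
  have hbound : ‖∮ z in C(0, ρ), f z‖ ≤ 2 * π * ρ * (max M 0 * ρ ^ (-n - 1)) := by
    apply circleIntegral.norm_integral_le_of_norm_le_const hρ0.le
    intro w hw
    rw [mem_sphere_zero_iff_norm] at hw
    have : ‖f w‖ = ρ ^ (-n - 1) * ‖g w‖ := by
      simp only [hf, norm_mul, norm_zpow, hw]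
    rw [this, mul_comm (max M 0)]
    apply mul_le_mul_of_nonneg_left _ hzle
    exact le_max_of_le_left (hM w (by rwa [mem_sphere_zero_iff_norm]))
  rw [eq1] at hbound
  have hnorm : ‖(2 * ↑π * Complex.I) * a n‖ = 2 * π * ‖a n‖ := by
    rw [norm_mul]
    simp [abs_of_pos Real.pi_pos]
  rw [hnorm] at hbound
  have hρn : ρ * ρ ^ (-n - 1) = ρ ^ (-n) := by
    rw [show -n = (-n - 1) + 1 by ring, zpow_add_one₀ (ne_of_gt hρ0)]
    ring
  have h2π : (0:ℝ) < 2 * π := by positivity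
  have : 2 * π * ‖a n‖ ≤ 2 * π * (max M 0 * ρ ^ (-n)) := by
    calc 2 * π * ‖a n‖ ≤ 2 * π * ρ * (max M 0 * ρ ^ (-n - 1)) := hbound
      _ = 2 * π * (max M 0 * (ρ * ρ ^ (-n - 1))) := by ring
      _ = 2 * π * (max M 0 * ρ ^ (-n)) := by rw [hρn]
  exact le_of_mul_le_mul_left this h2π

set_option maxHeartbeats 1000000 in
/-- For a smooth 2π-periodic curve γ, a holomorphic extension to the annulus
r₁ < |z| < r₂ (with boundary values γ on the unit circle) exists iff both the
nonnegative and negative parts of the Laurent series built from the Fourier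
coefficients of γ converge at every point of the annulus. -/
theorem geodesic_exists_iff_laurent_series_converges
    (γ : ℝ → ℂ) (hγ : ContDiff ℝ (⊤ : ℕ∞) γ)
    (hper : ∀ θ : ℝ, γ (θ + 2 * π) = γ θ)
    (a : ℤ → ℂ)
    (ha : ∀ n : ℤ, a n = (2 * (π : ℂ))⁻¹ *
      ∫ θ in (0:ℝ)..(2 * π), γ θ * Complex.exp (-(n : ℂ) * (θ : ℂ) * Complex.I))
    (r₁ r₂ : ℝ) (hr₁ : 0 < r₁) (hr₁' : r₁ < 1) (hr₂ : 1 < r₂) :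
    (∃ g : ℂ → ℂ,
      (∀ z : ℂ, r₁ < ‖z‖ → ‖z‖ < r₂ → DifferentiableAt ℂ g z) ∧
      (∀ θ : ℝ, g (Complex.exp ((θ : ℂ) * Complex.I)) = γ θ)) ↔
    (∀ z : ℂ, r₁ < ‖z‖ → ‖z‖ < r₂ →
      (∃ l : ℂ, Tendsto (fun N : ℕ => ∑ n ∈ Finset.range N, a (n : ℤ) * z ^ n)
        atTop (nhds l)) ∧
      (∃ l : ℂ, Tendsto (fun N : ℕ => ∑ n ∈ Finset.Icc 1 N, a (-(n : ℤ)) * z ^ (-(n : ℤ)))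
        atTop (nhds l))) := by
  constructor
  · rintro ⟨g, hg, hb⟩ z hz1 hz2
    have hz0 : (0:ℝ) < ‖z‖ := hr₁.trans hz1
    constructor
    · obtain ⟨ρ, hzρ, hρr⟩ : ∃ ρ : ℝ, ‖z‖ < ρ ∧ ρ < r₂ :=
        ⟨(‖z‖ + r₂) / 2, by linarith, by linarith⟩
      obtain ⟨M, hM0, hM⟩ := coeff_bound ha hr₁ hr₁' hr₂ hg hb
        (ρ := ρ) (by linarith) hρr
      have hρ0 : 0 < ρ := hz0.trans hzρ
      have hsum : Summable (fun n : ℕ => a (n:ℤ) * z ^ n) := by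
        apply summable_geom_bound (C := M) (r := ‖z‖ / ρ) (by positivity)
          (by rw [div_lt_one hρ0]; exact hzρ)
        intro n
        rw [norm_mul, norm_pow]
        calc ‖a n‖ * ‖z‖ ^ n
            ≤ (M * ρ ^ (-(n:ℤ))) * ‖z‖ ^ n :=
              mul_le_mul_of_nonneg_right (hM n) (by positivity)
          _ = M * (‖z‖ / ρ) ^ n := by
              rw [zpow_neg, zpow_natCast, div_pow]; ring
      exact ⟨_, hsum.hasSum.tendsto_sum_nat⟩
    · obtain ⟨s, hrs, hsz⟩ : ∃ s : ℝ, r₁ < s ∧ s < ‖z‖ :=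
        ⟨(r₁ + ‖z‖) / 2, by linarith, by linarith⟩
      obtain ⟨M, hM0, hM⟩ := coeff_bound ha hr₁ hr₁' hr₂ hg hb
        (ρ := s) hrs (by linarith)
      have hs0 : 0 < s := hr₁.trans hrs
      have hsum : Summable (fun n : ℕ => a (-(n:ℤ)) * z ^ (-(n:ℤ))) := by
        apply summable_geom_bound (C := M) (r := s / ‖z‖) (by positivity)
          (by rw [div_lt_one hz0]; exact hsz)
        intro n
        rw [norm_mul, norm_zpow]
        have h1 := hM (-(n:ℤ))
        rw [neg_neg] at h1
        calc ‖a (-(n:ℤ))‖ * ‖z‖ ^ (-(n:ℤ))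
            ≤ (M * s ^ (n:ℤ)) * ‖z‖ ^ (-(n:ℤ)) :=
              mul_le_mul_of_nonneg_right h1 (by positivity)
          _ = M * (s / ‖z‖) ^ n := by
              rw [zpow_neg, zpow_natCast, zpow_natCast, div_pow]; ring
      have hsum' : Summable (fun n : ℕ => a (-(((n + 1 : ℕ)):ℤ)) * z ^ (-(((n + 1 : ℕ)):ℤ))) :=
        (summable_nat_add_iff 1).mpr hsum
      exact tendsto_Icc_of_summable hsum'
  · intro H
    have habs : ∀ s : ℝ, r₁ < s → s < r₂ →
        (∃ C : ℝ, 0 ≤ C ∧ ∀ n : ℕ, ‖a n‖ * s ^ n ≤ C) ∧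
        (∃ C : ℝ, 0 ≤ C ∧ ∀ n : ℕ, 1 ≤ n → ‖a (-(n:ℤ))‖ ≤ C * s ^ n) := by
      intro s hs1 hs2
      have hs0 : 0 < s := hr₁.trans hs1
      have hzs : ‖(s : ℂ)‖ = s := by
        rw [Complex.norm_real, Real.norm_eq_abs, abs_of_pos hs0]
      obtain ⟨⟨l1, h1⟩, ⟨l2, h2⟩⟩ := H (s:ℂ) (by rwa [hzs]) (by rwa [hzs])
      constructor
      · obtain ⟨C, hC⟩ := exists_bound_of_tendsto_range h1
        have key : ∀ n : ℕ, ‖a n‖ * s ^ n ≤ C := by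
          intro n
          have := hC n
          rwa [norm_mul, norm_pow,
            hzs] at this
        exact ⟨C, le_trans (by positivity) (key 0), key⟩
      · obtain ⟨C, hC⟩ := exists_bound_of_tendsto_Icc h2
        have hC1 : (0:ℝ) ≤ C := le_trans (norm_nonneg _) (hC 1 le_rfl)
        refine ⟨C, hC1, fun n hn => ?_⟩
        have := hC n hn
        rw [norm_mul, norm_zpow, hzs,
          zpow_neg, zpow_natCast, ← div_eq_mul_inv, div_le_iff₀ (pow_pos hs0 n)] at this
        linarith [this]
    refine ⟨fun z => (∑' n : ℕ, a (n:ℤ) * z ^ n) +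
      ∑' n : ℕ, a (-((n:ℤ) + 1)) * (z⁻¹) ^ (n + 1), ?_, ?_⟩
    · intro z hz1 hz2
      have hz0 : (0:ℝ) < ‖z‖ := hr₁.trans hz1
      have hzne : z ≠ 0 := by
        intro h; rw [h] at hz0; simp at hz0
      have hd1 : DifferentiableAt ℂ (fun z => ∑' n : ℕ, a (n:ℤ) * z ^ n) z := by
        obtain ⟨ρ, hzρ, hρr⟩ : ∃ ρ : ℝ, ‖z‖ < ρ ∧ ρ < r₂ :=
          ⟨(‖z‖ + r₂) / 2, by linarith, by linarith⟩
        obtain ⟨ρ', hρρ', hρ'r⟩ : ∃ ρ' : ℝ, ρ < ρ' ∧ ρ' < r₂ :=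
          ⟨(ρ + r₂) / 2, by linarith, by linarith⟩
        have hρpos : 0 < ρ := hz0.trans hzρ
        have hρ'pos : 0 < ρ' := hρpos.trans hρρ'
        obtain ⟨C, hC0, hC⟩ := (habs ρ' (by linarith) hρ'r).1
        have hdOn : DifferentiableOn ℂ (fun w : ℂ => ∑' n : ℕ, a (n:ℤ) * w ^ n)
            (ball (0:ℂ) ρ) := by
          apply Complex.differentiableOn_tsum_of_summable_norm
            (u := fun n : ℕ => C * (ρ / ρ') ^ n)
            (((summable_geometric_of_lt_one (by positivity)
              (by rw [div_lt_one hρ'pos]; exact hρρ')).mul_left C))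
            (fun i => ((differentiable_const _).mul (differentiable_pow i)).differentiableOn)
            isOpen_ball
          intro i w hw
          rw [mem_ball, dist_zero_right] at hw
          have key : ρ ^ i = ρ' ^ i * (ρ / ρ') ^ i := by
            rw [div_pow]; field_simp
          calc ‖a (i:ℤ) * w ^ i‖ = ‖a i‖ * ‖w‖ ^ i := by
                rw [norm_mul, norm_pow]
            _ ≤ ‖a i‖ * ρ ^ i :=
                mul_le_mul_of_nonneg_left (pow_le_pow_left₀ (norm_nonneg w) hw.le i)
                  (norm_nonneg _)
            _ = (‖a i‖ * ρ' ^ i) * (ρ / ρ') ^ i := by rw [key]; ring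
            _ ≤ C * (ρ / ρ') ^ i :=
                mul_le_mul_of_nonneg_right (hC i) (by positivity)
        apply hdOn.differentiableAt (isOpen_ball.mem_nhds ?_)
        rw [mem_ball, dist_zero_right]
        exact hzρ
      have hd2 : DifferentiableAt ℂ
          (fun z : ℂ => ∑' n : ℕ, a (-((n:ℤ) + 1)) * (z⁻¹) ^ (n + 1)) z := by
        obtain ⟨s, hrs, hsz⟩ : ∃ s : ℝ, r₁ < s ∧ s < ‖z‖ :=
          ⟨(r₁ + ‖z‖) / 2, by linarith, by linarith⟩
        obtain ⟨s', hrs', hs's⟩ : ∃ s' : ℝ, r₁ < s' ∧ s' < s :=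
          ⟨(r₁ + s) / 2, by linarith, by linarith⟩
        have hspos : 0 < s := hr₁.trans hrs
        have hs'pos : 0 < s' := hr₁.trans hrs'
        obtain ⟨C, hC0, hC⟩ := (habs s' hrs' (by linarith)).2
        have hdOn : DifferentiableOn ℂ
            (fun w : ℂ => ∑' n : ℕ, a (-((n:ℤ) + 1)) * w ^ (n + 1))
            (ball (0:ℂ) (1 / s)) := by
          apply Complex.differentiableOn_tsum_of_summable_norm
            (u := fun n : ℕ => (C * (s' / s)) * (s' / s) ^ n)
            (((summable_geometric_of_lt_one (by positivity)
              (by rw [div_lt_one hspos]; exact hs's)).mul_left _))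
            (fun i => ((differentiable_const _).mul (differentiable_pow (i + 1))).differentiableOn)
            isOpen_ball
          intro i w hw
          rw [mem_ball, dist_zero_right] at hw
          have hai : ‖a (-((i:ℤ) + 1))‖ ≤ C * s' ^ (i + 1) := by
            have := hC (i + 1) (Nat.le_add_left 1 i)
            exact_mod_cast this
          calc ‖a (-((i:ℤ) + 1)) * w ^ (i + 1)‖
              = ‖a (-((i:ℤ) + 1))‖ * ‖w‖ ^ (i + 1) := by
                rw [norm_mul, norm_pow]
            _ ≤ (C * s' ^ (i + 1)) * (1 / s) ^ (i + 1) := by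
                apply mul_le_mul hai (pow_le_pow_left₀ (norm_nonneg w) hw.le (i + 1))
                  (by positivity) (by positivity)
            _ = (C * (s' / s)) * (s' / s) ^ i := by
                have hsne : s ≠ 0 := ne_of_gt hspos
                field_simp
                ring_nf
                rw [mul_inv_cancel_right₀ hsne]
        have hmem : z⁻¹ ∈ ball (0:ℂ) (1 / s) := by
          rw [mem_ball, dist_zero_right, norm_inv, one_div,
            inv_lt_inv₀ hz0 hspos]
          exact hsz
        have hF := hdOn.differentiableAt (isOpen_ball.mem_nhds hmem)
        exact hF.comp z (differentiableAt_inv hzne)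
      exact hd1.add hd2
    · intro θ
      haveI : Fact (0 < 2 * π) := ⟨by positivity⟩
      have hper' : Function.Periodic γ (2 * π) := hper
      set w := Complex.exp ((θ:ℂ) * Complex.I) with hw
      have hwabs : ‖w‖ = 1 := by
        rw [hw, Complex.norm_exp]
        simp
      have hwne : w ≠ 0 := by rw [hw]; exact Complex.exp_ne_zero _
      obtain ⟨Cp, hCp0, hCp⟩ := (habs ((1 + r₂) / 2) (by linarith) (by linarith)).1
      obtain ⟨Cm, hCm0, hCm⟩ := (habs ((r₁ + 1) / 2) (by linarith) (by linarith)).2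
      have hρpos : (0:ℝ) < (1 + r₂) / 2 := by linarith
      have hρgt1 : (1:ℝ) < (1 + r₂) / 2 := by linarith
      have hσpos : (0:ℝ) < (r₁ + 1) / 2 := by linarith
      have hσlt1 : (r₁ + 1) / 2 < 1 := by linarith
      have hboundp : ∀ n : ℕ, ‖a n‖ ≤ Cp * (((1 + r₂) / 2)⁻¹) ^ n := by
        intro n
        have h0 := hCp n
        rw [← le_div_iff₀ (pow_pos hρpos n)] at h0
        rw [inv_pow, ← div_eq_mul_inv]
        exact h0
      have hboundm : ∀ n : ℕ, 1 ≤ n →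
          ‖a (-(n:ℤ))‖ ≤ Cm * ((r₁ + 1) / 2) ^ n := hCm
      have hsum1 : Summable (fun n : ℕ => a (n:ℤ) * w ^ n) := by
        apply summable_geom_bound (C := Cp) (r := ((1 + r₂) / 2)⁻¹)
          (by positivity) (by rw [inv_lt_one_iff₀]; right; exact hρgt1)
        intro n
        rw [norm_mul, norm_pow, hwabs,
          one_pow, mul_one]
        exact hboundp n
      have hboundm' : ∀ n : ℕ, ‖a (-((n:ℤ) + 1))‖
          ≤ (Cm * ((r₁ + 1) / 2)) * ((r₁ + 1) / 2) ^ n := by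
        intro n
        have h0 := hboundm (n + 1) (Nat.le_add_left 1 n)
        push_cast at h0
        calc ‖a (-((n:ℤ) + 1))‖ ≤ Cm * ((r₁ + 1) / 2) ^ (n + 1) := h0
          _ = (Cm * ((r₁ + 1) / 2)) * ((r₁ + 1) / 2) ^ n := by ring
      have hsum2 : Summable (fun n : ℕ => a (-((n:ℤ) + 1)) * (w⁻¹) ^ (n + 1)) := by
        apply summable_geom_bound (C := Cm * ((r₁ + 1) / 2)) (r := (r₁ + 1) / 2)
          (by positivity) hσlt1
        intro n
        rw [norm_mul, norm_pow, norm_inv,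
          hwabs, inv_one, one_pow, mul_one]
        exact hboundm' n
      have hlift : Continuous hper'.lift := by
        rw [Topology.IsQuotientMap.continuous_iff isQuotientMap_quotient_mk']
        exact hγ.continuous
      set F : C(AddCircle (2 * π), ℂ) := ⟨hper'.lift, hlift⟩ with hF
      have hFcoe : ∀ x : ℝ, F ((x : ℝ) : AddCircle (2 * π)) = γ x := fun x => hper'.lift_coe x
      have hcoeff : ∀ n : ℤ, fourierCoeff (⇑F) n = a n := by
        intro n
        rw [fourierCoeff_eq_intervalIntegral _ n 0, ha n, zero_add]
        have hterm : ∀ x : ℝ, (fourier (-n) ((x : ℝ) : AddCircle (2 * π)) : ℂ) •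
            F ((x:ℝ) : AddCircle (2*π))
            = γ x * Complex.exp (-(n : ℂ) * (x : ℂ) * Complex.I) := by
          intro x
          rw [smul_eq_mul, fourier_coe_apply, hFcoe x, mul_comm]
          congr 2
          have hπ : (π : ℂ) ≠ 0 := Complex.ofReal_ne_zero.mpr Real.pi_ne_zero
          push_cast
          field_simp
        simp_rw [hterm]
        rw [Complex.real_smul]
        push_cast
        rw [one_div]
      have hsumZ : Summable (fourierCoeff (⇑F)) := by
        have hsa : Summable a := by
          apply Summable.of_nat_of_neg_add_one
          · apply summable_geom_bound (C := Cp) (r := ((1 + r₂) / 2)⁻¹)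
              (by positivity) (by rw [inv_lt_one_iff₀]; right; exact hρgt1)
            intro n
            exact hboundp n
          · apply summable_geom_bound (C := Cm * ((r₁ + 1) / 2)) (r := (r₁ + 1) / 2)
              (by positivity) hσlt1
            intro n
            exact hboundm' n
        exact hsa.congr fun n => (hcoeff n).symm
      have hpt := has_pointwise_sum_fourier_series_of_summable hsumZ
        ((θ : ℝ) : AddCircle (2 * π))
      have hterm2 : ∀ i : ℤ, fourierCoeff (⇑F) i •
          (fourier i ((θ:ℝ) : AddCircle (2 * π)) : ℂ) = a i * w ^ i := by
        intro i
        rw [hcoeff, smul_eq_mul, fourier_coe_apply]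
        congr 1
        rw [hw, ← Complex.exp_int_mul]
        congr 1
        have hπ : (π : ℂ) ≠ 0 := Complex.ofReal_ne_zero.mpr Real.pi_ne_zero
        push_cast
        field_simp
      have hpt' : HasSum (fun i : ℤ => a i * w ^ i) (γ θ) := by
        rw [show F ((θ:ℝ) : AddCircle (2 * π)) = γ θ from hFcoe θ] at hpt
        exact hpt.congr_fun fun i => (hterm2 i).symm
      have h1 : HasSum (fun n : ℕ => a (n:ℤ) * w ^ ((n:ℕ):ℤ))
          (∑' n : ℕ, a (n:ℤ) * w ^ n) := by
        refine (hsum1.hasSum).congr_fun fun n => ?_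
        rw [zpow_natCast]
      have h2 : HasSum (fun n : ℕ => a (-((n:ℤ) + 1)) * w ^ (-((n:ℤ) + 1)))
          (∑' n : ℕ, a (-((n:ℤ) + 1)) * (w⁻¹) ^ (n + 1)) := by
        refine (hsum2.hasSum).congr_fun fun n => ?_
        rw [zpow_neg, ← inv_zpow, show ((n:ℤ) + 1) = ((n + 1 : ℕ) : ℤ) by push_cast; ring,
          zpow_natCast]
      have hsplit : HasSum (fun i : ℤ => a i * w ^ i)
          ((∑' n : ℕ, a (n:ℤ) * w ^ n) +
            ∑' n : ℕ, a (-((n:ℤ) + 1)) * (w⁻¹) ^ (n + 1)) :=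
        HasSum.of_nat_of_neg_add_one h1 h2
      exact hsplit.unique hpt'
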